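/- Let 0 < ε < 1/4 and let A be a finite subset of an abelian group with G ⊆ A × A satisfying |G| ≥ (1−ε)|A|². Then there exists A' ⊆ A with |A'| ≥ (1−2√ε)|A| such that |A' − A'| ≤ C_ε |A −_G A|² / |A|, where A −_G A = {a₁ − a₂ : (a₁,a₂) ∈ G}. -/

import Mathlib

open scoped Classical

open Finset

theorem stmt12 (ε : ℝ) (hε : 0 < ε) (hε4 : ε < 1 / 4) :
    ∃ Cε : ℝ, 0 < Cε ∧
      ∀ (α : Type) [AddCommGroup α],
        ∀ (A : Finset α) (G : Finset (α × α)),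
          G ⊆ A ×ˢ A →
          (1 - ε) * (A.card : ℝ) ^ 2 ≤ (G.card : ℝ) →
          ∃ A' ⊆ A,
            (1 - 2 * Real.sqrt ε) * (A.card : ℝ) ≤ (A'.card : ℝ) ∧
            (((A' ×ˢ A').image fun q => q.1 - q.2).card : ℝ) ≤
              Cε * ((G.image fun g => g.1 - g.2).card : ℝ) ^ 2 / (A.card : ℝ) := by
  classical
  set s := Real.sqrt ε with hsdef
  have hs0 : 0 < s := Real.sqrt_pos.mpr hε
  have hs2 : s ^ 2 = ε := Real.sq_sqrt hε.le
  have hshalf : s < 1 / 2 := by nlinarith [Real.sqrt_nonneg ε]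
  have h2s : 0 < 1 - 2 * s := by linarith
  refine ⟨1 / (1 - 2 * s), by positivity, ?_⟩
  intro α _ A G hGA hG
  rcases A.eq_empty_or_nonempty with hA | hA
  · subst hA
    have hGe : G = ∅ := subset_empty.1 (by simpa using hGA)
    refine ⟨∅, subset_rfl, by simp, by simp [hGe]⟩
  have hn0 : (0 : ℝ) < (A.card : ℝ) := by
    exact_mod_cast Nat.pos_of_ne_zero (by simpa [Finset.card_eq_zero] using hA.ne_empty)
  set n : ℝ := (A.card : ℝ) with hndef
  -- degree
  set deg : α → ℕ := fun a => (A.filter fun b => (a, b) ∈ G).card with hdeg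
  have hdegle : ∀ a, (deg a : ℝ) ≤ n := by
    intro a
    exact_mod_cast Nat.cast_le.mpr (Finset.card_filter_le _ _)
  have hsum : ∑ a ∈ A, deg a = G.card := by
    rw [Finset.card_eq_sum_card_fiberwise (f := Prod.fst) (t := A)
      (fun p hp => (Finset.mem_product.1 (hGA hp)).1)]
    refine Finset.sum_congr rfl fun a ha => ?_
    refine Finset.card_bij' (fun b _ => (a, b)) (fun p _ => p.2) ?_ ?_ ?_ ?_
    · intro b hb
      have hb' := Finset.mem_filter.1 hb
      exact Finset.mem_filter.2 ⟨hb'.2, rfl⟩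
    · rintro ⟨x, y⟩ hp
      have hp' := Finset.mem_filter.1 hp
      have h1 : (x, y) ∈ G := hp'.1
      have h2 : x = a := hp'.2
      exact Finset.mem_filter.2 ⟨(Finset.mem_product.1 (hGA h1)).2, h2 ▸ h1⟩
    · intro b hb; rfl
    · rintro ⟨x, y⟩ hp
      have hp' := Finset.mem_filter.1 hp
      have h2 : x = a := hp'.2
      exact congrArg (fun z => (z, y)) h2.symm
  -- the set A'
  set A' : Finset α := A.filter (fun a => (1 - s) * n < (deg a : ℝ)) with hA'
  have hA'sub : A' ⊆ A := Finset.filter_subset _ _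
  set Bad : Finset α := A.filter (fun a => ¬ ((1 - s) * n < (deg a : ℝ))) with hBad
  -- bound the bad set
  have hBadcard : (Bad.card : ℝ) * (s * n) ≤ ε * n ^ 2 := by
    have h1 : ∑ a ∈ A, (n - (deg a : ℝ)) ≤ ε * n ^ 2 := by
      rw [Finset.sum_sub_distrib, Finset.sum_const]
      have : (∑ a ∈ A, (deg a : ℝ)) = (G.card : ℝ) := by
        rw [← hsum]; push_cast; ring
      rw [this]
      simp only [nsmul_eq_mul]
      rw [← hndef]
      nlinarith [hG]
    have h2 : ∑ a ∈ Bad, (n - (deg a : ℝ)) ≤ ∑ a ∈ A, (n - (deg a : ℝ)) := by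
      refine Finset.sum_le_sum_of_subset_of_nonneg (Finset.filter_subset _ _) ?_
      intro a ha _
      linarith [hdegle a]
    have h3 : (Bad.card : ℝ) * (s * n) ≤ ∑ a ∈ Bad, (n - (deg a : ℝ)) := by
      rw [← nsmul_eq_mul, ← Finset.sum_const]
      · refine Finset.sum_le_sum ?_
        intro a ha
        simp only [hBad, Finset.mem_filter, not_lt] at ha
        have := ha.2
        nlinarith
    linarith
  have hBadle : (Bad.card : ℝ) ≤ s * n := by
    have hsn : 0 < s * n := by positivity
    nlinarith
  have hA'card : (1 - 2 * s) * n ≤ (A'.card : ℝ) := by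
    have hsplit : A'.card + Bad.card = A.card := by
      rw [hA', hBad]
      exact Finset.card_filter_add_card_filter_not _
    have : (A'.card : ℝ) + (Bad.card : ℝ) = n := by rw [hndef]; exact_mod_cast hsplit
    nlinarith
  refine ⟨A', hA'sub, hA'card, ?_⟩
  -- main counting
  set D : Finset α := G.image fun g => g.1 - g.2 with hDdef
  set E : Finset α := (A' ×ˢ A').image fun q => q.1 - q.2 with hEdef
  have key : ∀ x ∈ E, (1 - 2 * s) * n ≤ (((D ×ˢ D).filter fun p => p.1 - p.2 = x).card : ℝ) := by
    intro x hx
    obtain ⟨⟨a, a'⟩, hmem, rfl⟩ := Finset.mem_image.1 hx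
    obtain ⟨ha, ha'⟩ := Finset.mem_product.1 hmem
    have hda : (1 - s) * n < (deg a : ℝ) := (Finset.mem_filter.1 ha).2
    have hda' : (1 - s) * n < (deg a' : ℝ) := (Finset.mem_filter.1 ha').2
    set I : Finset α := A.filter fun b => (a, b) ∈ G ∧ (a', b) ∈ G with hIdef
    have hIcard : (1 - 2 * s) * n ≤ (I.card : ℝ) := by
      have hint : I = (A.filter fun b => (a, b) ∈ G) ∩ (A.filter fun b => (a', b) ∈ G) := by
        rw [hIdef, Finset.filter_and]
      have hunion : ((A.filter fun b => (a, b) ∈ G) ∪ (A.filter fun b => (a', b) ∈ G)).card ≤ A.card := by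
        refine Finset.card_le_card ?_
        exact Finset.union_subset (Finset.filter_subset _ _) (Finset.filter_subset _ _)
      have hie := Finset.card_inter_add_card_union
        (A.filter fun b => (a, b) ∈ G) (A.filter fun b => (a', b) ∈ G)
      have hieR : (I.card : ℝ) ≥ (deg a : ℝ) + (deg a' : ℝ) - n := by
        rw [hint]
        have h1 : ((A.filter fun b => (a, b) ∈ G).card : ℝ) = (deg a : ℝ) := rfl
        have h2 : ((A.filter fun b => (a', b) ∈ G).card : ℝ) = (deg a' : ℝ) := rfl
        have hieC : ((((A.filter fun b => (a, b) ∈ G) ∩ (A.filter fun b => (a', b) ∈ G)).card : ℝ))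
            + (((A.filter fun b => (a, b) ∈ G) ∪ (A.filter fun b => (a', b) ∈ G)).card : ℝ)
            = (deg a : ℝ) + (deg a' : ℝ) := by exact_mod_cast hie
        have hunionR : (((A.filter fun b => (a, b) ∈ G) ∪ (A.filter fun b => (a', b) ∈ G)).card : ℝ) ≤ n := by
          rw [hndef]; exact_mod_cast hunion
        linarith
      linarith
    have hinj : I.card ≤ (((D ×ˢ D).filter fun p => p.1 - p.2 = a - a').card) := by
      refine Finset.card_le_card_of_injOn (fun b => (a - b, a' - b)) ?_ ?_
      · intro b hb
        simp only [hIdef, Finset.mem_coe, Finset.mem_filter] at hb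
        obtain ⟨-, hb1, hb2⟩ := hb
        simp only [Finset.mem_coe, Finset.mem_filter, Finset.mem_product]
        refine ⟨⟨?_, ?_⟩, by abel⟩
        · exact Finset.mem_image.2 ⟨(a, b), hb1, rfl⟩
        · exact Finset.mem_image.2 ⟨(a', b), hb2, rfl⟩
      · intro b1 _ b2 _ h
        have := congrArg Prod.fst h
        simp only at this
        exact sub_right_injective this
    calc (1 - 2 * s) * n ≤ (I.card : ℝ) := hIcard
      _ ≤ _ := by exact_mod_cast hinj
  have hEsub : E ⊆ (D ×ˢ D).image fun p => p.1 - p.2 := by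
    intro x hx
    have hpos : 0 < (((D ×ˢ D).filter fun p => p.1 - p.2 = x).card : ℝ) :=
      lt_of_lt_of_le (by positivity) (key x hx)
    have : ((D ×ˢ D).filter fun p => p.1 - p.2 = x).Nonempty := by
      rw [← Finset.card_pos]; exact_mod_cast hpos
    obtain ⟨p, hp⟩ := this
    simp only [Finset.mem_filter] at hp
    exact Finset.mem_image.2 ⟨p, hp.1, hp.2⟩
  have hsum2 : ∑ x ∈ E, (((D ×ˢ D).filter fun p => p.1 - p.2 = x).card) ≤ (D ×ˢ D).card := by
    rw [Finset.card_eq_sum_card_fiberwise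
      (f := fun p => p.1 - p.2) (t := (D ×ˢ D).image fun p => p.1 - p.2)
      (fun p hp => Finset.mem_image_of_mem _ hp)]
    exact Finset.sum_le_sum_of_subset hEsub
  have hmain : (E.card : ℝ) * ((1 - 2 * s) * n) ≤ (D.card : ℝ) ^ 2 := by
    have h1 : (E.card : ℝ) * ((1 - 2 * s) * n)
        ≤ ∑ x ∈ E, (((D ×ˢ D).filter fun p => p.1 - p.2 = x).card : ℝ) := by
      rw [← nsmul_eq_mul, ← Finset.sum_const]
      exact Finset.sum_le_sum key
    have h2 : (∑ x ∈ E, (((D ×ˢ D).filter fun p => p.1 - p.2 = x).card : ℝ))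
        ≤ ((D ×ˢ D).card : ℝ) := by exact_mod_cast hsum2
    have h3 : ((D ×ˢ D).card : ℝ) = (D.card : ℝ) ^ 2 := by
      rw [Finset.card_product]; push_cast; ring
    linarith
  have hne1 : (1 - 2 * s) ≠ 0 := ne_of_gt h2s
  have hne2 : n ≠ 0 := ne_of_gt hn0
  have hr : 1 / (1 - 2 * s) * (D.card : ℝ) ^ 2 / n = (D.card : ℝ) ^ 2 / ((1 - 2 * s) * n) := by
    field_simp
  calc (E.card : ℝ) ≤ (D.card : ℝ) ^ 2 / ((1 - 2 * s) * n) := by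
        rw [le_div_iff₀ (by positivity)]; exact hmain
    _ = 1 / (1 - 2 * s) * (D.card : ℝ) ^ 2 / n := hr.symm
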